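/- Let T be a tree, v a core of T, and L ⊆ V a set that contains a local set for v. If x ≠ y are vertices of the subtree consisting of v and its g-legs such that x,y ∉ L and d(x,v) < d(y,v), then every vertex of L, except possibly the vertices on the g-leg of v that contains y, separates x and y. -/

import Mathlib

open SimpleGraph

variable {V : Type*} [Fintype V] [DecidableEq V]

/-- A vertex `τ` separates `u` and `w` if its distances to them differ. -/
def Separates (T : SimpleGraph V) (τ u w : V) : Prop :=
  T.dist τ u ≠ T.dist τ w

/-- There are at least two vertices of `L` separating `u` and `w`. -/
def HasTwoSeparators (T : SimpleGraph V) (L : Set V) (u w : V) : Prop :=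
  ∃ τ₁ ∈ L, ∃ τ₂ ∈ L, τ₁ ≠ τ₂ ∧ Separates T τ₁ u w ∧ Separates T τ₂ u w

/-- `L` is a landmark set (non-landmarks model, `k = 2`): every pair of distinct
vertices outside `L` is separated by at least two vertices of `L`. -/
def IsLandmarkSet (T : SimpleGraph V) (L : Set V) : Prop :=
  ∀ u w : V, u ≠ w → u ∉ L → w ∉ L → HasTwoSeparators T L u w

/-- A core is a vertex of degree at least 3. -/
def IsCore (T : SimpleGraph V) [DecidableRel T.Adj] (v : V) : Prop :=
  3 ≤ T.degree v

/-- The subtree of the neighbor `x` of `v`: in a tree, the connected component of `x`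
obtained by removing `v`, characterized via distances (`w` is in it iff the path from
`v` to `w` passes through `x`). -/
def Branch (T : SimpleGraph V) (v x : V) : Set V :=
  {w | T.dist v w = T.dist x w + 1}

/-- The subtree of the neighbor `x` of `v` is a (standard) leg:
a path containing no cores. -/
def IsStandardLeg (T : SimpleGraph V) [DecidableRel T.Adj] (v x : V) : Prop :=
  T.Adj v x ∧ ∀ w ∈ Branch T v x, T.degree w ≤ 2

/-- A short leg consists of a single vertex. -/
def IsShortLeg (T : SimpleGraph V) [DecidableRel T.Adj] (v x : V) : Prop :=
  IsStandardLeg T v x ∧ Branch T v x = {x}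

/-- A long leg is a standard leg that is not short. -/
def IsLongLeg (T : SimpleGraph V) [DecidableRel T.Adj] (v x : V) : Prop :=
  IsStandardLeg T v x ∧ Branch T v x ≠ {x}

/-- A small core: degree exactly 3, with at least two standard legs, one of which is short. -/
def IsSmallCore (T : SimpleGraph V) [DecidableRel T.Adj] (v : V) : Prop :=
  T.degree v = 3 ∧ ∃ x y : V, x ≠ y ∧ IsShortLeg T v x ∧ IsStandardLeg T v y

/-- A regular core is a core that is not small. -/
def IsRegularCore (T : SimpleGraph V) [DecidableRel T.Adj] (v : V) : Prop :=
  IsCore T v ∧ ¬ IsSmallCore T v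

/-- A modified leg of `v`: a subtree of a neighbor of `v` containing exactly one core,
which is a small core. -/
def IsModifiedLeg (T : SimpleGraph V) [DecidableRel T.Adj] (v x : V) : Prop :=
  T.Adj v x ∧ ∃ u ∈ Branch T v x, IsSmallCore T u ∧
    ∀ w ∈ Branch T v x, IsCore T w → w = u

/-- A g-leg is a standard leg or a modified leg. -/
def IsGLeg (T : SimpleGraph V) [DecidableRel T.Adj] (v x : V) : Prop :=
  IsStandardLeg T v x ∨ IsModifiedLeg T v x

/-- A minor core: a regular core which either (i) has at most one g-leg, or
(ii) has degree at least 4, no modified legs, exactly two standard legs one of which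
is short, and every other subtree of a neighbor contains a regular core. -/
def IsMinorCore (T : SimpleGraph V) [DecidableRel T.Adj] (v : V) : Prop :=
  IsRegularCore T v ∧
  ((∀ x y : V, IsGLeg T v x → IsGLeg T v y → x = y) ∨
   (4 ≤ T.degree v ∧ (∀ x : V, ¬ IsModifiedLeg T v x) ∧
    (∃ x y : V, x ≠ y ∧ IsShortLeg T v x ∧ IsStandardLeg T v y ∧
      ∀ z : V, IsStandardLeg T v z → z = x ∨ z = y) ∧
    (∀ z : V, T.Adj v z → ¬ IsGLeg T v z → ∃ w ∈ Branch T v z, IsRegularCore T w)))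

/-- A main core is a regular core that is not minor. -/
def IsMainCore (T : SimpleGraph V) [DecidableRel T.Adj] (v : V) : Prop :=
  IsRegularCore T v ∧ ¬ IsMinorCore T v

/-- The vertices lying on g-legs of `v`. -/
def GLegVerts (T : SimpleGraph V) [DecidableRel T.Adj] (v : V) : Set V :=
  {w | ∃ x : V, IsGLeg T v x ∧ w ∈ Branch T v x}

/-- Type (s,0) solution on the leg of neighbor `x` of `v`: the empty set. -/
def SolS0 (T : SimpleGraph V) (v x : V) (S : Set V) : Prop :=
  S ∩ Branch T v x = ∅

/-- Type (s,1) solution: one vertex of the leg whose position is at least 2. -/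
def SolS1 (T : SimpleGraph V) (v x : V) (S : Set V) : Prop :=
  ∃ w : V, S ∩ Branch T v x = {w} ∧ 2 ≤ T.dist v w

/-- Type (s,2) solution: at least two vertices of the leg. -/
def SolS2 (T : SimpleGraph V) (v x : V) (S : Set V) : Prop :=
  ∃ w₁ ∈ S ∩ Branch T v x, ∃ w₂ ∈ S ∩ Branch T v x, w₁ ≠ w₂

/-- Type (s,3) solution: exactly the vertex with position 1 (that is, `x`). -/
def SolS3 (T : SimpleGraph V) (v x : V) (S : Set V) : Prop :=
  S ∩ Branch T v x = {x}

/-- For a modified leg `x` of `v`: `u` is its small core (at position `T.dist v u`),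
and `a`, `b` are the two vertices at position `T.dist v u + 1`, where `b` is the
vertex of a short leg of `u` (the vertex `ℓ^b`) and `a` is the other one (`ℓ^a`). -/
def MLegPair (T : SimpleGraph V) [DecidableRel T.Adj] (v x u a b : V) : Prop :=
  u ∈ Branch T v x ∧ IsSmallCore T u ∧ a ≠ b ∧
  a ∈ Branch T v x ∧ b ∈ Branch T v x ∧
  T.dist v a = T.dist v u + 1 ∧ T.dist v b = T.dist v u + 1 ∧
  IsShortLeg T u b

/-- Type (m,1) solution on the modified leg `x` of `v`: either `{ℓ^a}` or `{ℓ^b}`. -/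
def SolM1 (T : SimpleGraph V) [DecidableRel T.Adj] (v x : V) (S : Set V) : Prop :=
  ∃ u a b : V, MLegPair T v x u a b ∧
    (S ∩ Branch T v x = {a} ∨ S ∩ Branch T v x = {b})

/-- Type (m,2) solution: contains neither `ℓ^a` nor `ℓ^b`, contains at least two
vertices of positions at least `i + 2`, and no vertex of position `i + 1`. -/
def SolM2 (T : SimpleGraph V) [DecidableRel T.Adj] (v x : V) (S : Set V) : Prop :=
  ∃ u a b : V, MLegPair T v x u a b ∧ a ∉ S ∧ b ∉ S ∧
    (∃ w₁ ∈ S ∩ Branch T v x, ∃ w₂ ∈ S ∩ Branch T v x, w₁ ≠ w₂ ∧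
      T.dist v u + 2 ≤ T.dist v w₁ ∧ T.dist v u + 2 ≤ T.dist v w₂) ∧
    ∀ w ∈ S ∩ Branch T v x, T.dist v w ≠ T.dist v u + 1

/-- Type (m,3) solution: at least two vertices, one of which is `ℓ^a` or `ℓ^b`. -/
def SolM3 (T : SimpleGraph V) [DecidableRel T.Adj] (v x : V) (S : Set V) : Prop :=
  ∃ u a b : V, MLegPair T v x u a b ∧
    (∃ w₁ ∈ S ∩ Branch T v x, ∃ w₂ ∈ S ∩ Branch T v x, w₁ ≠ w₂) ∧
    (a ∈ S ∨ b ∈ S)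

/-- `S` is a local set for the core `v`. -/
def IsLocalSet (T : SimpleGraph V) [DecidableRel T.Adj] (v : V) (S : Set V) : Prop :=
  S ⊆ GLegVerts T v ∧
  -- (1) at most one standard leg has a type (s,0) solution, and every standard leg
  -- has a solution of one of the types (s,0), (s,1), (s,2), (s,3)
  (∀ x y : V, IsStandardLeg T v x → IsStandardLeg T v y → x ≠ y →
    SolS0 T v x S → SolS0 T v y S → False) ∧
  (∀ x : V, IsStandardLeg T v x →
    SolS0 T v x S ∨ SolS1 T v x S ∨ SolS2 T v x S ∨ SolS3 T v x S) ∧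
  -- (2) every modified leg has a solution of type (m,1), (m,2) or (m,3)
  (∀ x : V, IsModifiedLeg T v x →
    SolM1 T v x S ∨ SolM2 T v x S ∨ SolM3 T v x S) ∧
  -- (3) if some standard leg has a type (s,0) solution, no modified leg has type (m,1)
  ((∃ x : V, IsStandardLeg T v x ∧ SolS0 T v x S) →
    ∀ y : V, IsModifiedLeg T v y → ¬ SolM1 T v y S) ∧
  -- (4) if some long leg has a type (s,0) solution, every other long leg has type (s,2)
  (∀ x : V, IsLongLeg T v x → SolS0 T v x S →
    ∀ y : V, IsLongLeg T v y → y ≠ x → SolS2 T v y S) ∧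
  -- (5) if some short leg has a type (s,0) solution, every long leg has type (s,2) or (s,3)
  ((∃ x : V, IsShortLeg T v x ∧ SolS0 T v x S) →
    ∀ y : V, IsLongLeg T v y → SolS2 T v y S ∨ SolS3 T v y S)

/-- A local set is thrifty if its solutions of types (s,2), (m,2) and (m,3)
consist of exactly two vertices each. -/
def IsThrifty (T : SimpleGraph V) [DecidableRel T.Adj] (v : V) (S : Set V) : Prop :=
  (∀ x : V, IsStandardLeg T v x → SolS2 T v x S → (S ∩ Branch T v x).ncard = 2) ∧
  (∀ x : V, IsModifiedLeg T v x → (SolM2 T v x S ∨ SolM3 T v x S) →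
    (S ∩ Branch T v x).ncard = 2)

set_option linter.unusedSectionVars false

lemma dist_add_dist_le_length {T : SimpleGraph V} {s t u : V}
    (p : T.Walk s t) (h : u ∈ p.support) :
    T.dist s u + T.dist u t ≤ p.length := by
  calc T.dist s u + T.dist u t
      ≤ (p.takeUntil u h).length + (p.dropUntil u h).length :=
        Nat.add_le_add (SimpleGraph.dist_le _) (SimpleGraph.dist_le _)
    _ = p.length := by rw [← SimpleGraph.Walk.length_append, p.take_spec h]

lemma tree_adj_dist_dichot {T : SimpleGraph V} (hT : T.IsTree) {a b : V}
    (hab : T.Adj a b) (w : V) :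
    T.dist w b = T.dist w a + 1 ∨ T.dist w a = T.dist w b + 1 := by
  have hconn := hT.isConnected
  have hd1 : T.dist a b = 1 := SimpleGraph.dist_eq_one_iff_adj.mpr hab
  have h1 : T.dist w b ≤ T.dist w a + 1 := by
    have := hconn.dist_triangle (u := w) (v := a) (w := b); omega
  have h2 : T.dist w a ≤ T.dist w b + 1 := by
    have := hconn.dist_triangle (u := w) (v := b) (w := a)
    have : T.dist b a = 1 := SimpleGraph.dist_eq_one_iff_adj.mpr hab.symm
    omega
  rcases Nat.lt_trichotomy (T.dist w a) (T.dist w b) with h | h | h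
  · left; omega
  · -- equal distances: contradiction via unique paths
    exfalso
    obtain ⟨p, hp, hpl⟩ := hconn.exists_path_of_dist w a
    obtain ⟨r, hr, hrl⟩ := hconn.exists_path_of_dist w b
    have hbns : b ∉ p.support := by
      intro hb
      have := dist_add_dist_le_length p hb
      have : T.dist b a = 1 := SimpleGraph.dist_eq_one_iff_adj.mpr hab.symm
      omega
    have hq : (SimpleGraph.Walk.cons hab.symm p.reverse).IsPath := by
      rw [SimpleGraph.Walk.cons_isPath_iff]
      refine ⟨hp.reverse, ?_⟩
      rw [SimpleGraph.Walk.support_reverse]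
      simpa using hbns
    have := (hT.existsUnique_path b w).unique hq hr.reverse
    have hlen : (SimpleGraph.Walk.cons hab.symm p.reverse).length = r.reverse.length := by
      rw [this]
    simp [SimpleGraph.Walk.length_reverse, hpl, hrl] at hlen
    omega
  · right; omega

lemma tree_crossing {T : SimpleGraph V} (hT : T.IsTree) {v c a b : V}
    (hvc : T.Adj v c) (hab : T.Adj a b)
    (ha : a ∉ Branch T v c) (hb : b ∈ Branch T v c) : a = v := by
  have hconn := hT.isConnected
  have hca : T.dist c a = T.dist v a + 1 := by
    have e1 : T.dist v a = T.dist a v := SimpleGraph.dist_comm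
    have e2 : T.dist c a = T.dist a c := SimpleGraph.dist_comm
    rcases tree_adj_dist_dichot hT hvc a with h | h
    · omega
    · exact absurd (show T.dist v a = T.dist c a + 1 by omega) ha
  have hvb : T.dist v b = T.dist c b + 1 := hb
  set m := T.dist v a with hm
  have h1 : T.dist v b ≤ T.dist v a + 1 := by
    have := hconn.dist_triangle (u := v) (v := a) (w := b)
    have : T.dist a b = 1 := SimpleGraph.dist_eq_one_iff_adj.mpr hab
    omega
  have h2 : T.dist c a ≤ T.dist c b + 1 := by
    have := hconn.dist_triangle (u := c) (v := b) (w := a)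
    have : T.dist b a = 1 := SimpleGraph.dist_eq_one_iff_adj.mpr hab.symm
    omega
  have hcb : T.dist c b = m := by omega
  have hvb' : T.dist v b = m + 1 := by omega
  obtain ⟨q, hq, hql⟩ := hconn.exists_path_of_dist c b
  obtain ⟨r, hrp, hrl⟩ := hconn.exists_path_of_dist v a
  set p1 : T.Walk v b := SimpleGraph.Walk.cons hvc q with hp1def
  set p2 : T.Walk v b := r.append (SimpleGraph.Walk.cons hab SimpleGraph.Walk.nil) with hp2def
  have hp1l : p1.length = T.dist v b := by simp [hp1def, hql, hcb, hvb']
  have hp2l : p2.length = T.dist v b := by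
    simp [hp2def, SimpleGraph.Walk.length_append, hrl, hvb']
    omega
  have hp1 : p1.IsPath := p1.isPath_of_length_eq_dist hp1l
  have hp2 : p2.IsPath := p2.isPath_of_length_eq_dist hp2l
  have heq : p1 = p2 := (hT.existsUnique_path v b).unique hp1 hp2
  have hamem : a ∈ p1.support := by
    rw [heq, hp2def, SimpleGraph.Walk.mem_support_append_iff]
    exact Or.inr (SimpleGraph.Walk.start_mem_support _)
  rw [hp1def, SimpleGraph.Walk.support_cons, List.mem_cons] at hamem
  rcases hamem with h | h
  · exact h
  · exfalso
    have := dist_add_dist_le_length q h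
    have : T.dist a b = 1 := SimpleGraph.dist_eq_one_iff_adj.mpr hab
    omega

lemma tree_walk_mem {T : SimpleGraph V} (hT : T.IsTree) {v c : V} (hvc : T.Adj v c) :
    ∀ {z w : V} (p : T.Walk z w), z ∉ Branch T v c → w ∈ Branch T v c →
      v ∈ p.support := by
  intro z w p
  induction p with
  | nil => intro hz hw; exact absurd hw hz
  | @cons z u w h q ih =>
    intro hz hw
    by_cases hu : u ∈ Branch T v c
    · have : z = v := tree_crossing hT hvc h hz hu
      rw [SimpleGraph.Walk.support_cons]
      exact this ▸ List.mem_cons_self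
    · rw [SimpleGraph.Walk.support_cons]
      exact List.mem_cons_of_mem _ (ih hu hw)

lemma tree_dist_through {T : SimpleGraph V} (hT : T.IsTree) {v c z w : V}
    (hvc : T.Adj v c) (hz : z ∉ Branch T v c) (hw : w ∈ Branch T v c) :
    T.dist z w = T.dist z v + T.dist v w := by
  have hconn := hT.isConnected
  obtain ⟨p, hpl⟩ := hconn.exists_walk_length_eq_dist z w
  have hv : v ∈ p.support := tree_walk_mem hT hvc p hz hw
  have h1 : T.dist z v + T.dist v w ≤ T.dist z w := by
    have := dist_add_dist_le_length p hv; omega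
  have h2 := hconn.dist_triangle (u := z) (v := v) (w := w)
  omega

/-- for a core `v` and a set `L` containing a local set for `v`,
if `x ≠ y` are vertices of the subtree consisting of `v` and its g-legs, both
outside `L`, with `d(x,v) < d(y,v)`, then every vertex of `L`, except possibly
those on the g-leg of `v` containing `y`, separates `x` and `y`. -/
theorem farther_vertex_separated_by_all_but_its_leg
    (T : SimpleGraph V) [DecidableRel T.Adj] (hT : T.IsTree)
    (v : V) (hv : IsCore T v) (L : Set V)
    (hloc : ∃ S : Set V, S ⊆ L ∧ IsLocalSet T v S)
    (x y : V)
    (hx : x ∈ insert v (GLegVerts T v)) (hy : y ∈ insert v (GLegVerts T v))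
    (hxy : x ≠ y) (hxL : x ∉ L) (hyL : y ∉ L)
    (hd : T.dist x v < T.dist y v) :
    ∀ z ∈ L, (∀ x' : V, IsGLeg T v x' → y ∈ Branch T v x' → z ∉ Branch T v x') →
      Separates T z x y := by
  intro z hzL hz
  have hconn := hT.isConnected
  rcases Set.mem_insert_iff.mp hy with rfl | hy'
  · have : T.dist y y = 0 := SimpleGraph.dist_self
    omega
  obtain ⟨ly, hgl, hyB⟩ := hy'
  have hadj : T.Adj v ly := by rcases hgl with h | h; exacts [h.1, h.1]
  have hzB : z ∉ Branch T v ly := hz ly hgl hyB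
  have hkey : T.dist z y = T.dist z v + T.dist v y := tree_dist_through hT hadj hzB hyB
  have htri : T.dist z x ≤ T.dist z v + T.dist v x := hconn.dist_triangle
  have e1 : T.dist v x = T.dist x v := SimpleGraph.dist_comm
  have e2 : T.dist v y = T.dist y v := SimpleGraph.dist_comm
  show T.dist z x ≠ T.dist z y
  omega
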